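/- Perturbed randomized Kaczmarz convergence: consider the iteration x_{k+1} = x_k + (b̃_{r_k} − ⟨Ã_{r_k*}, x_k⟩) Ã_{r_k*} + μ_k Ã_{r_k*}, where Ã_{r*} = A_{r*}/‖A_{r*}‖ and b̃_r = b_r/‖A_{r*}‖, r_k sampled with probability ‖A_{r*}‖²/‖A‖_F², and μ_k is a random perturbation with conditional mean 0 and conditional variance at most (ε²/(4T)) ‖x_k‖² for T = κ_F² log(2/ε²). Then after T iterations starting from x_0 = 0, E[‖x_T − x_*‖²] ≤ ε² ‖x_*‖² (assuming A x_* = b and x_* in the row space of A). -/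

import Mathlib

open Finset

set_option maxHeartbeats 2000000

/-- Perturbed randomized Kaczmarz convergence.  Consider the iteration
`x_{k+1} = x_k + (b̃_{r_k} − ⟨Ã_{r_k*}, x_k⟩) Ã_{r_k*} + μ_k Ã_{r_k*}`, where
`Ã_{r*} = A_{r*}/‖A_{r*}‖`, `b̃_r = b_r/‖A_{r*}‖`, the index `r_k` is sampled with
probability `‖A_{r*}‖²/‖A‖_F²`, and the perturbation `μ_k = g k x_k r_k ξ_k`
(with `ξ_k` drawn independently from a finite distribution `(Ξ, w)`) has conditional
mean `0` and conditional variance at most `(ε²/(4T))‖x_k‖²`, for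
`T = κ_F² log(2/ε²)`.  Then, starting from `x_0 = 0`, after `T` iterations
`E[‖x_T − x_*‖²] ≤ ε² ‖x_*‖²` (assuming `A x_* = b` and `x_*` in the row space of `A`).
Here `cinv` stands for `‖A⁻¹‖` and the sample space is `Fin T → Fin m × Ξ`. -/
theorem stmt7 (m n T : ℕ) (A : Matrix (Fin m) (Fin n) ℝ)
    (hrow : ∀ i, (∑ j, A i j ^ 2) ≠ 0)
    (cinv : ℝ) (hcinv0 : 0 < cinv)
    (hcinv : ∀ w : Fin n → ℝ, (∃ y : Fin m → ℝ, w = Matrix.vecMul y A) →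
      (∑ j, w j ^ 2) ≤ cinv ^ 2 * ∑ i, (A.mulVec w i) ^ 2)
    (ε : ℝ) (hε0 : 0 < ε) (hε1 : ε < 1)
    (hT : (T : ℝ) = (∑ i, ∑ j, A i j ^ 2) * cinv ^ 2 * Real.log (2 / ε ^ 2))
    (b : Fin m → ℝ) (xstar : Fin n → ℝ)
    (hb : A.mulVec xstar = b)
    (hxstar : ∃ y : Fin m → ℝ, xstar = Matrix.vecMul y A)
    -- the perturbation distribution
    (Ξ : Type) [Fintype Ξ] (w : Ξ → ℝ) (hw0 : ∀ ξ, 0 ≤ w ξ) (hw1 : ∑ ξ, w ξ = 1)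
    (g : ℕ → (Fin n → ℝ) → Fin m → Ξ → ℝ)
    (hmean : ∀ k v i, ∑ ξ, w ξ * g k v i ξ = 0)
    (hvar : ∀ k v i, ∑ ξ, w ξ * (g k v i ξ) ^ 2 ≤ ε ^ 2 / (4 * T) * ∑ j, v j ^ 2)
    -- the random iterates, over the sample space of T i.i.d. draws of (row index, ξ)
    (x : (Fin T → Fin m × Ξ) → ℕ → Fin n → ℝ)
    (hinit : ∀ ω, x ω 0 = 0)
    (hstep : ∀ (ω : Fin T → Fin m × Ξ) (k : Fin T),
      x ω (k.1 + 1) = fun j => x ω k.1 j +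
        ((b ((ω k).1) / Real.sqrt (∑ l, A ((ω k).1) l ^ 2)
            - ∑ l, A ((ω k).1) l / Real.sqrt (∑ l', A ((ω k).1) l' ^ 2) * x ω k.1 l)
          + g k.1 (x ω k.1) ((ω k).1) ((ω k).2))
          * (A ((ω k).1) j / Real.sqrt (∑ l, A ((ω k).1) l ^ 2))) :
    ∑ ω : Fin T → Fin m × Ξ,
        (∏ k, ((∑ j, A ((ω k).1) j ^ 2) / (∑ i, ∑ j, A i j ^ 2)) * w ((ω k).2)) *
        (∑ j, (x ω T j - xstar j) ^ 2)
      ≤ ε ^ 2 * ∑ j, xstar j ^ 2 := by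
  classical
  by_cases hm : m = 0
  · -- degenerate case: no rows, xstar = 0, T = 0
    obtain ⟨y, hy⟩ := hxstar
    have hx0 : ∀ j, xstar j = 0 := by
      intro j
      rw [hy]
      subst hm
      simp [Matrix.vecMul, dotProduct]
    have hT0 : T = 0 := by
      have h : (T : ℝ) = 0 := by
        rw [hT]
        subst hm
        simp
      exact_mod_cast h
    subst hT0
    have : ∀ ω : Fin 0 → Fin m × Ξ, ∑ j, (x ω 0 j - xstar j) ^ 2 = 0 := by
      intro ω
      rw [hinit ω]
      simp [hx0]
    simp only [this, mul_zero, Finset.sum_const_zero]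
    have : ∑ j, xstar j ^ 2 = 0 := by simp [hx0]
    rw [this]
    simp
  -- main case
  have hmpos : 0 < m := Nat.pos_of_ne_zero hm
  have hstep' : ∀ (ω : Fin T → Fin m × Ξ) (k : ℕ) (hk : k < T),
      x ω (k + 1) = fun j => x ω k j +
        ((b ((ω ⟨k, hk⟩).1) / Real.sqrt (∑ l, A ((ω ⟨k, hk⟩).1) l ^ 2)
            - ∑ l, A ((ω ⟨k, hk⟩).1) l / Real.sqrt (∑ l', A ((ω ⟨k, hk⟩).1) l' ^ 2) * x ω k l)
          + g k (x ω k) ((ω ⟨k, hk⟩).1) ((ω ⟨k, hk⟩).2))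
          * (A ((ω ⟨k, hk⟩).1) j / Real.sqrt (∑ l, A ((ω ⟨k, hk⟩).1) l ^ 2)) :=
    fun ω k hk => hstep ω ⟨k, hk⟩
  set S : ℝ := ∑ i, ∑ j, A i j ^ 2 with hSdef
  have hNpos : ∀ i, 0 < ∑ j, A i j ^ 2 := by
    intro i
    exact lt_of_le_of_ne (Finset.sum_nonneg fun j _ => sq_nonneg _) (Ne.symm (hrow i))
  have hSpos : 0 < S := by
    rw [hSdef]
    exact Finset.sum_pos (fun i _ => hNpos i) ⟨⟨0, hmpos⟩, Finset.mem_univ _⟩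
  set L : ℝ := Real.log (2 / ε ^ 2) with hLdef
  have hε2 : ε ^ 2 ≤ 1 := by nlinarith
  have hexp14 : Real.exp (1/4 : ℝ) ≤ 3/2 := by
    have h4 : Real.exp (1/4 : ℝ) ^ 4 = Real.exp 1 := by
      rw [← Real.exp_nat_mul]; norm_num
    by_contra hcon
    push_neg at hcon
    have h5 : (3/2:ℝ) ^ 4 < Real.exp (1/4:ℝ) ^ 4 :=
      pow_lt_pow_left₀ hcon (by norm_num) (by norm_num)
    have he := Real.exp_one_lt_d9
    rw [h4] at h5
    norm_num at h5
    linarith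
  have hlog2 : (1:ℝ)/4 ≤ Real.log 2 := by
    rw [Real.le_log_iff_exp_le (by norm_num : (0:ℝ) < 2)]
    linarith
  have hL2 : Real.log 2 ≤ L := by
    rw [hLdef]
    apply Real.log_le_log (by norm_num)
    rw [le_div_iff₀ (by positivity)]
    nlinarith
  have hLpos : 0 < L := lt_of_lt_of_le (by linarith) hL2
  have hTpos : 0 < (T:ℝ) := by
    rw [hT]
    positivity
  have hTnat : 0 < T := by exact_mod_cast hTpos
  have hSc1 : 1 ≤ S * cinv ^ 2 := by
    have i0 : Fin m := ⟨0, hmpos⟩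
    have hrowv : (fun j => A i0 j) = Matrix.vecMul (Pi.single i0 1) A := by
      funext j
      simp [Matrix.vecMul, dotProduct, Pi.single_apply]
    have h1 := hcinv (fun j => A i0 j) ⟨Pi.single i0 1, hrowv⟩
    have h2 : ∀ i, (A.mulVec (fun j => A i0 j) i) ^ 2 ≤ (∑ j, A i j ^ 2) * (∑ j, A i0 j ^ 2) := by
      intro i
      have := Finset.sum_mul_sq_le_sq_mul_sq Finset.univ (fun j => A i j) (fun j => A i0 j)
      simpa [Matrix.mulVec, dotProduct] using this
    have h3 : ∑ i, (A.mulVec (fun j => A i0 j) i) ^ 2 ≤ S * (∑ j, A i0 j ^ 2) := by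
      rw [hSdef, Finset.sum_mul]
      exact Finset.sum_le_sum fun i _ => h2 i
    have h4 : (∑ j, A i0 j ^ 2) ≤ cinv ^ 2 * (S * (∑ j, A i0 j ^ 2)) := by
      refine le_trans h1 ?_
      have : (0:ℝ) ≤ cinv ^ 2 := sq_nonneg _
      nlinarith [h3]
    have h5 := hNpos i0
    nlinarith
  have hScpos : 0 < S * cinv ^ 2 := by positivity
  set a : ℝ := 1 / (S * cinv ^ 2) with hadef
  set dlt : ℝ := ε ^ 2 / (4 * T) with hddef
  have ha0 : 0 < a := by rw [hadef]; positivity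
  have ha1 : a ≤ 1 := by
    rw [hadef, div_le_one hScpos]
    exact hSc1
  have hd0 : 0 ≤ dlt := by rw [hddef]; positivity
  have haT : a * T = L := by
    rw [hadef, hT]
    field_simp
  have hdT : dlt * T = ε ^ 2 / 4 := by
    rw [hddef]
    field_simp
  have hda : dlt ≤ a := by
    have h1 : ε ^ 2 ≤ 4 * L := by nlinarith
    rw [hddef, div_le_iff₀ (by nlinarith : (0:ℝ) < 4 * T)]
    calc ε ^ 2 ≤ 4 * L := h1
      _ = 4 * (a * T) := by rw [haT]
      _ = a * (4 * T) := by ring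
  set q : Fin m × Ξ → ℝ := fun c => (∑ j, A c.1 j ^ 2) / S * w c.2 with hqdef
  have hq0 : ∀ c, 0 ≤ q c := by
    intro c
    rw [hqdef]
    exact mul_nonneg (div_nonneg (le_of_lt (hNpos c.1)) (le_of_lt hSpos)) (hw0 c.2)
  have hqsum : ∑ c, q c = 1 := by
    rw [hqdef, Fintype.sum_prod_type]
    simp only [← Finset.sum_mul, ← Finset.mul_sum]
    rw [hw1]
    rw [← Finset.sum_div]
    rw [← hSdef]
    field_simp
  set P : (Fin T → Fin m × Ξ) → ℝ := fun ω => ∏ k, q (ω k) with hPdef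
  have hP0 : ∀ ω, 0 ≤ P ω := by
    intro ω
    rw [hPdef]
    exact Finset.prod_nonneg fun k _ => hq0 _
  have hPsum : ∑ ω, P ω = 1 := by
    rw [hPdef]
    rw [show (Finset.univ : Finset (Fin T → Fin m × Ξ)) = Fintype.piFinset (fun _ => Finset.univ) from (Fintype.piFinset_univ).symm]
    rw [← Finset.prod_univ_sum]
    exact Finset.prod_eq_one (fun k _ => hqsum)
  have xdep : ∀ (k : ℕ), k ≤ T → ∀ ω ω' : Fin T → Fin m × Ξ,
      (∀ j : Fin T, (j : ℕ) < k → ω j = ω' j) → x ω k = x ω' k := by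
    intro k
    induction k with
    | zero => intro _ ω ω' _; rw [hinit, hinit]
    | succ k ih =>
      intro hk ω ω' hagree
      have hkT : k < T := Nat.lt_of_lt_of_le (Nat.lt_succ_self k) hk
      have hxk : x ω k = x ω' k := ih (le_of_lt hkT) ω ω' (fun j hj => hagree j (Nat.lt_succ_of_lt hj))
      have hωk : ω ⟨k, hkT⟩ = ω' ⟨k, hkT⟩ := hagree ⟨k, hkT⟩ (Nat.lt_succ_self k)
      rw [hstep' ω k hkT, hstep' ω' k hkT, hxk, hωk]
  have xrow : ∀ (ω : Fin T → Fin m × Ξ) (k : ℕ), k ≤ T → ∃ y, x ω k = Matrix.vecMul y A := by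
    intro ω k
    induction k with
    | zero =>
      intro _
      exact ⟨0, by rw [hinit]; simp [Matrix.vecMul]⟩
    | succ k ih =>
      intro hk
      have hkT : k < T := Nat.lt_of_lt_of_le (Nat.lt_succ_self k) hk
      obtain ⟨y, hy⟩ := ih (le_of_lt hkT)
      refine ⟨y + Pi.single ((ω ⟨k, hkT⟩).1)
        (((b ((ω ⟨k, hkT⟩).1) / Real.sqrt (∑ l, A ((ω ⟨k, hkT⟩).1) l ^ 2)
            - ∑ l, A ((ω ⟨k, hkT⟩).1) l / Real.sqrt (∑ l', A ((ω ⟨k, hkT⟩).1) l' ^ 2) * x ω k l)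
          + g k (x ω k) ((ω ⟨k, hkT⟩).1) ((ω ⟨k, hkT⟩).2))
          / Real.sqrt (∑ l, A ((ω ⟨k, hkT⟩).1) l ^ 2)), ?_⟩
      rw [hstep' ω k hkT]
      funext j
      rw [Matrix.add_vecMul]
      have hsingle : ∀ (i : Fin m) (co : ℝ), Matrix.vecMul (Pi.single i co) A j = co * A i j := by
        intro i co
        simp [Matrix.vecMul, dotProduct, Pi.single_apply, ite_mul]
      simp only [Pi.add_apply]
      rw [hsingle]
      rw [← hy]
      rw [div_mul_eq_mul_div, mul_div_assoc]
  have L1 : ∀ (k : Fin T) (f : Fin m × Ξ → (Fin n → ℝ) → ℝ),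
      ∑ ω, P ω * f (ω k) (x ω k.1) = ∑ ω, P ω * ∑ c, q c * f c (x ω k.1) := by
    intro k f
    have key : ∀ (ω : Fin T → Fin m × Ξ) (c : Fin m × Ξ),
        P (Function.update ω k c) * q (ω k) = P ω * q c := by
      intro ω c
      have h1 : P (Function.update ω k c) = q c * ∏ j ∈ Finset.univ.erase k, q (ω j) := by
        show ∏ j, q (Function.update ω k c j) = _
        rw [← Finset.mul_prod_erase Finset.univ _ (Finset.mem_univ k)]
        simp only [Function.update_self]
        congr 1
        exact Finset.prod_congr rfl (fun j hj =>
          by rw [Function.update_of_ne (Finset.ne_of_mem_erase hj)])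
      have h2 : P ω = q (ω k) * ∏ j ∈ Finset.univ.erase k, q (ω j) := by
        show ∏ j, q (ω j) = _
        exact (Finset.mul_prod_erase Finset.univ _ (Finset.mem_univ k)).symm
      rw [h1, h2]; ring
    have hxupd : ∀ (ω : Fin T → Fin m × Ξ) (c : Fin m × Ξ),
        x (Function.update ω k c) k.1 = x ω k.1 := by
      intro ω c
      apply xdep k.1 (le_of_lt k.2)
      intro j hj
      exact Function.update_of_ne (Fin.ne_of_val_ne (Nat.ne_of_lt hj)) c ω
    have hsum := Equiv.sum_comp
      (⟨fun p => (Function.update p.1 k p.2, p.1 k),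
        fun p => (Function.update p.1 k p.2, p.1 k),
        by
          intro p
          simp [Function.update_idem, Function.update_self, Function.update_eq_self],
        by
          intro p
          simp [Function.update_idem, Function.update_self, Function.update_eq_self]⟩ :
        ((Fin T → Fin m × Ξ) × (Fin m × Ξ)) ≃ ((Fin T → Fin m × Ξ) × (Fin m × Ξ)))
      (fun p : (Fin T → Fin m × Ξ) × (Fin m × Ξ) => P p.1 * q p.2 * f p.2 (x p.1 k.1))
    simp only [Equiv.coe_fn_mk] at hsum
    calc ∑ ω, P ω * f (ω k) (x ω k.1)
        = ∑ ω, ∑ c, P ω * q c * f (ω k) (x ω k.1) := by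
          apply Finset.sum_congr rfl
          intro ω _
          have h3 : ∑ c, P ω * q c * f (ω k) (x ω k.1)
              = (∑ c, q c) * (P ω * f (ω k) (x ω k.1)) := by
            rw [Finset.sum_mul]
            exact Finset.sum_congr rfl (fun c _ => by ring)
          rw [h3, hqsum, one_mul]
      _ = ∑ p : (Fin T → Fin m × Ξ) × (Fin m × Ξ),
            P p.1 * q p.2 * f (p.1 k) (x p.1 k.1) :=
          (Fintype.sum_prod_type
            (fun p : (Fin T → Fin m × Ξ) × (Fin m × Ξ) =>
              P p.1 * q p.2 * f (p.1 k) (x p.1 k.1))).symm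
      _ = ∑ p : (Fin T → Fin m × Ξ) × (Fin m × Ξ),
            P p.1 * q p.2 * f p.2 (x p.1 k.1) := by
          rw [← hsum]
          apply Finset.sum_congr rfl
          intro p _
          rw [key, hxupd]
      _ = ∑ ω, P ω * ∑ c, q c * f c (x ω k.1) := by
          rw [Fintype.sum_prod_type]
          apply Finset.sum_congr rfl
          intro ω _
          rw [Finset.mul_sum]
          exact Finset.sum_congr rfl (fun c _ => by ring)
  have hbi : ∀ i, b i = ∑ l, A i l * xstar l := by
    intro i
    rw [← hb]
    rfl
  have key1m : ∀ (kk : ℕ) (i : Fin m) (ξ : Ξ) (v : Fin n → ℝ) (j : Fin n),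
      (v j + ((b i / Real.sqrt (∑ l, A i l ^ 2)
            - ∑ l, A i l / Real.sqrt (∑ l', A i l' ^ 2) * v l)
          + g kk v i ξ) * (A i j / Real.sqrt (∑ l, A i l ^ 2))) - xstar j
      = (v j - xstar j)
        + (g kk v i ξ - (∑ l, A i l * (v l - xstar l)) / Real.sqrt (∑ l, A i l ^ 2))
          * (A i j / Real.sqrt (∑ l, A i l ^ 2)) := by
    intro kk i ξ v j
    have h1 : ∑ l, A i l / Real.sqrt (∑ l', A i l' ^ 2) * v l
        = (∑ l, A i l * v l) / Real.sqrt (∑ l', A i l' ^ 2) := by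
      rw [Finset.sum_div]
      exact Finset.sum_congr rfl (fun l _ => by ring)
    have h2 : ∑ l, A i l * (v l - xstar l) = (∑ l, A i l * v l) - ∑ l, A i l * xstar l := by
      rw [← Finset.sum_sub_distrib]
      exact Finset.sum_congr rfl (fun l _ => by ring)
    rw [hbi i, h1, h2]
    ring
  have scal : ∀ U D N s G : ℝ, s ≠ 0 → s ^ 2 = N →
      U + (2 * (G - D / s) / s) * D + ((G - D / s) ^ 2 / s ^ 2) * N = U - D ^ 2 / N + G ^ 2 := by
    intro U D N s G hs hN
    subst hN
    field_simp
    ring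
  have key1 : ∀ (kk : ℕ) (i : Fin m) (ξ : Ξ) (v : Fin n → ℝ),
      ∑ j, ((v j + ((b i / Real.sqrt (∑ l, A i l ^ 2)
            - ∑ l, A i l / Real.sqrt (∑ l', A i l' ^ 2) * v l)
          + g kk v i ξ) * (A i j / Real.sqrt (∑ l, A i l ^ 2))) - xstar j) ^ 2
      = (∑ j, (v j - xstar j) ^ 2)
        - (∑ l, A i l * (v l - xstar l)) ^ 2 / (∑ l, A i l ^ 2)
        + g kk v i ξ ^ 2 := by
    intro kk i ξ v
    have hN := hNpos i
    have hs2 : Real.sqrt (∑ l, A i l ^ 2) ^ 2 = ∑ l, A i l ^ 2 :=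
      Real.sq_sqrt (le_of_lt hN)
    have hspos : 0 < Real.sqrt (∑ l, A i l ^ 2) := Real.sqrt_pos.mpr hN
    have hsne : Real.sqrt (∑ l, A i l ^ 2) ≠ 0 := ne_of_gt hspos
    calc ∑ j, ((v j + ((b i / Real.sqrt (∑ l, A i l ^ 2)
            - ∑ l, A i l / Real.sqrt (∑ l', A i l' ^ 2) * v l)
          + g kk v i ξ) * (A i j / Real.sqrt (∑ l, A i l ^ 2))) - xstar j) ^ 2
        = ∑ j, ((v j - xstar j) ^ 2
            + (2 * (g kk v i ξ - (∑ l, A i l * (v l - xstar l)) / Real.sqrt (∑ l, A i l ^ 2))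
                / Real.sqrt (∑ l, A i l ^ 2)) * (A i j * (v j - xstar j))
            + ((g kk v i ξ - (∑ l, A i l * (v l - xstar l)) / Real.sqrt (∑ l, A i l ^ 2)) ^ 2
                / Real.sqrt (∑ l, A i l ^ 2) ^ 2) * (A i j ^ 2)) := by
          apply Finset.sum_congr rfl
          intro j _
          rw [key1m kk i ξ v j]
          ring
      _ = (∑ j, (v j - xstar j) ^ 2)
            + (2 * (g kk v i ξ - (∑ l, A i l * (v l - xstar l)) / Real.sqrt (∑ l, A i l ^ 2))
                / Real.sqrt (∑ l, A i l ^ 2)) * (∑ j, A i j * (v j - xstar j))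
            + ((g kk v i ξ - (∑ l, A i l * (v l - xstar l)) / Real.sqrt (∑ l, A i l ^ 2)) ^ 2
                / Real.sqrt (∑ l, A i l ^ 2) ^ 2) * (∑ j, A i j ^ 2) := by
          rw [Finset.sum_add_distrib, Finset.sum_add_distrib, ← Finset.mul_sum, ← Finset.mul_sum]
      _ = (∑ j, (v j - xstar j) ^ 2)
            - (∑ l, A i l * (v l - xstar l)) ^ 2 / (∑ l, A i l ^ 2)
            + g kk v i ξ ^ 2 := by
          exact scal _ _ _ _ _ hsne hs2
  have hNS : ∑ i, (∑ j, A i j ^ 2) / S = 1 := by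
    rw [← Finset.sum_div, ← hSdef, div_self (ne_of_gt hSpos)]
  have key2 : ∀ (kk : ℕ) (v : Fin n → ℝ),
      (∑ j, (v j - xstar j) ^ 2) ≤ cinv ^ 2 * ∑ i, (∑ l, A i l * (v l - xstar l)) ^ 2 →
      ∑ c : Fin m × Ξ, q c * ∑ j, ((v j + ((b c.1 / Real.sqrt (∑ l, A c.1 l ^ 2)
            - ∑ l, A c.1 l / Real.sqrt (∑ l', A c.1 l' ^ 2) * v l)
          + g kk v c.1 c.2) * (A c.1 j / Real.sqrt (∑ l, A c.1 l ^ 2))) - xstar j) ^ 2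
        ≤ (1 - a) * (∑ j, (v j - xstar j) ^ 2) + dlt * ∑ j, v j ^ 2 := by
    intro kk v hu
    have hsplit : ∑ c : Fin m × Ξ, q c * ∑ j, ((v j + ((b c.1 / Real.sqrt (∑ l, A c.1 l ^ 2)
            - ∑ l, A c.1 l / Real.sqrt (∑ l', A c.1 l' ^ 2) * v l)
          + g kk v c.1 c.2) * (A c.1 j / Real.sqrt (∑ l, A c.1 l ^ 2))) - xstar j) ^ 2
        = (∑ c : Fin m × Ξ, q c * ((∑ j, (v j - xstar j) ^ 2)
              - (∑ l, A c.1 l * (v l - xstar l)) ^ 2 / (∑ l, A c.1 l ^ 2)))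
          + ∑ c : Fin m × Ξ, q c * g kk v c.1 c.2 ^ 2 := by
      rw [← Finset.sum_add_distrib]
      apply Finset.sum_congr rfl
      intro c _
      rw [key1 kk c.1 c.2 v]
      ring
    rw [hsplit]
    have hpiece1 : (∑ c : Fin m × Ξ, q c * ((∑ j, (v j - xstar j) ^ 2)
              - (∑ l, A c.1 l * (v l - xstar l)) ^ 2 / (∑ l, A c.1 l ^ 2)))
        ≤ (1 - a) * (∑ j, (v j - xstar j) ^ 2) := by
      have e1 : (∑ c : Fin m × Ξ, q c * ((∑ j, (v j - xstar j) ^ 2)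
              - (∑ l, A c.1 l * (v l - xstar l)) ^ 2 / (∑ l, A c.1 l ^ 2)))
          = ∑ i, ((∑ j, A i j ^ 2) / S) * ((∑ j, (v j - xstar j) ^ 2)
              - (∑ l, A i l * (v l - xstar l)) ^ 2 / (∑ l, A i l ^ 2)) := by
        rw [Fintype.sum_prod_type]
        apply Finset.sum_congr rfl
        intro i _
        calc ∑ ξ, q (i, ξ) * ((∑ j, (v j - xstar j) ^ 2)
              - (∑ l, A i l * (v l - xstar l)) ^ 2 / (∑ l, A i l ^ 2))
            = ∑ ξ, w ξ * (((∑ j, A i j ^ 2) / S) * ((∑ j, (v j - xstar j) ^ 2)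
              - (∑ l, A i l * (v l - xstar l)) ^ 2 / (∑ l, A i l ^ 2))) := by
              apply Finset.sum_congr rfl
              intro ξ _
              show (∑ j, A i j ^ 2) / S * w ξ * _ = _
              ring
          _ = ((∑ j, A i j ^ 2) / S) * ((∑ j, (v j - xstar j) ^ 2)
              - (∑ l, A i l * (v l - xstar l)) ^ 2 / (∑ l, A i l ^ 2)) := by
              rw [← Finset.sum_mul, hw1, one_mul]
      rw [e1]
      have e2 : ∀ i : Fin m, ((∑ j, A i j ^ 2) / S) * ((∑ j, (v j - xstar j) ^ 2)
              - (∑ l, A i l * (v l - xstar l)) ^ 2 / (∑ l, A i l ^ 2))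
          = ((∑ j, (v j - xstar j) ^ 2) * ((∑ j, A i j ^ 2) / S)
              - (∑ l, A i l * (v l - xstar l)) ^ 2 / S) := by
        intro i
        have hNne := ne_of_gt (hNpos i)
        have hSne := ne_of_gt hSpos
        field_simp
      rw [Finset.sum_congr rfl (fun i _ => e2 i)]
      rw [Finset.sum_sub_distrib]
      rw [← Finset.mul_sum, hNS, mul_one]
      rw [← Finset.sum_div]
      have h3 : a * (∑ j, (v j - xstar j) ^ 2)
          ≤ (∑ i, (∑ l, A i l * (v l - xstar l)) ^ 2) / S := by
        rw [le_div_iff₀ hSpos]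
        have h4 : a * (∑ j, (v j - xstar j) ^ 2) * S = (∑ j, (v j - xstar j) ^ 2) / cinv ^ 2 := by
          rw [hadef]
          field_simp
        rw [h4, div_le_iff₀ (pow_pos hcinv0 2)]
        exact hu.trans_eq (mul_comm _ _)
      linarith
    have hpiece2 : (∑ c : Fin m × Ξ, q c * g kk v c.1 c.2 ^ 2) ≤ dlt * ∑ j, v j ^ 2 := by
      have e1 : (∑ c : Fin m × Ξ, q c * g kk v c.1 c.2 ^ 2)
          = ∑ i, ((∑ j, A i j ^ 2) / S) * ∑ ξ, w ξ * g kk v i ξ ^ 2 := by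
        rw [Fintype.sum_prod_type]
        apply Finset.sum_congr rfl
        intro i _
        rw [Finset.mul_sum]
        apply Finset.sum_congr rfl
        intro ξ _
        show (∑ j, A i j ^ 2) / S * w ξ * _ = _
        ring
      rw [e1]
      calc ∑ i, ((∑ j, A i j ^ 2) / S) * ∑ ξ, w ξ * g kk v i ξ ^ 2
          ≤ ∑ i, ((∑ j, A i j ^ 2) / S) * (dlt * ∑ j, v j ^ 2) := by
            apply Finset.sum_le_sum
            intro i _
            exact mul_le_mul_of_nonneg_left (hvar kk v i)
              (div_nonneg (le_of_lt (hNpos i)) (le_of_lt hSpos))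
        _ = dlt * ∑ j, v j ^ 2 := by
            rw [← Finset.sum_mul, hNS, one_mul]
    linarith
  have scal2 : ∀ (N s D Aj S' : ℝ), s ≠ 0 → S' ≠ 0 → s ^ 2 = N →
      N / S' * (-(D / s)) * (Aj / s) = -(Aj * D) / S' := by
    intro N s D Aj S' hs hS hN
    subst hN
    field_simp
  have key3 : ∀ (kk : ℕ) (v : Fin n → ℝ) (j : Fin n),
      ∑ c : Fin m × Ξ, q c * ((v j + ((b c.1 / Real.sqrt (∑ l, A c.1 l ^ 2)
            - ∑ l, A c.1 l / Real.sqrt (∑ l', A c.1 l' ^ 2) * v l)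
          + g kk v c.1 c.2) * (A c.1 j / Real.sqrt (∑ l, A c.1 l ^ 2))) - xstar j)
      = (v j - xstar j) - (∑ i, A i j * ∑ l, A i l * (v l - xstar l)) / S := by
    intro kk v j
    have hstep1 : ∀ c : Fin m × Ξ, q c * ((v j + ((b c.1 / Real.sqrt (∑ l, A c.1 l ^ 2)
            - ∑ l, A c.1 l / Real.sqrt (∑ l', A c.1 l' ^ 2) * v l)
          + g kk v c.1 c.2) * (A c.1 j / Real.sqrt (∑ l, A c.1 l ^ 2))) - xstar j)
        = q c * (v j - xstar j)
          + q c * ((g kk v c.1 c.2 - (∑ l, A c.1 l * (v l - xstar l)) / Real.sqrt (∑ l, A c.1 l ^ 2))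
              * (A c.1 j / Real.sqrt (∑ l, A c.1 l ^ 2))) := by
      intro c
      rw [key1m kk c.1 c.2 v j]
      ring
    rw [Finset.sum_congr rfl (fun c _ => hstep1 c), Finset.sum_add_distrib,
      ← Finset.sum_mul, hqsum, one_mul, sub_eq_add_neg]
    congr 1
    rw [Fintype.sum_prod_type]
    have hinner : ∀ i : Fin m,
        ∑ ξ, q (i, ξ) * ((g kk v i ξ - (∑ l, A i l * (v l - xstar l)) / Real.sqrt (∑ l, A i l ^ 2))
            * (A i j / Real.sqrt (∑ l, A i l ^ 2)))
        = -(A i j * ∑ l, A i l * (v l - xstar l)) / S := by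
      intro i
      have hs2 : Real.sqrt (∑ l, A i l ^ 2) ^ 2 = ∑ l, A i l ^ 2 :=
        Real.sq_sqrt (le_of_lt (hNpos i))
      have hsne : Real.sqrt (∑ l, A i l ^ 2) ≠ 0 := ne_of_gt (Real.sqrt_pos.mpr (hNpos i))
      have hSne : S ≠ 0 := ne_of_gt hSpos
      calc ∑ ξ, q (i, ξ) * ((g kk v i ξ - (∑ l, A i l * (v l - xstar l)) / Real.sqrt (∑ l, A i l ^ 2))
            * (A i j / Real.sqrt (∑ l, A i l ^ 2)))
          = ∑ ξ, ((((∑ l, A i l ^ 2) / S) * (A i j / Real.sqrt (∑ l, A i l ^ 2))) * (w ξ * g kk v i ξ)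
              + ((((∑ l, A i l ^ 2) / S) * (-((∑ l, A i l * (v l - xstar l)) / Real.sqrt (∑ l, A i l ^ 2)))
                  * (A i j / Real.sqrt (∑ l, A i l ^ 2)))) * w ξ) := by
            apply Finset.sum_congr rfl
            intro ξ _
            show (∑ l, A i l ^ 2) / S * w ξ * _ = _
            ring
        _ = (((∑ l, A i l ^ 2) / S) * (A i j / Real.sqrt (∑ l, A i l ^ 2))) * (∑ ξ, w ξ * g kk v i ξ)
              + ((((∑ l, A i l ^ 2) / S) * (-((∑ l, A i l * (v l - xstar l)) / Real.sqrt (∑ l, A i l ^ 2)))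
                  * (A i j / Real.sqrt (∑ l, A i l ^ 2)))) * (∑ ξ, w ξ) := by
            rw [Finset.sum_add_distrib, ← Finset.mul_sum, ← Finset.mul_sum]
        _ = -(A i j * ∑ l, A i l * (v l - xstar l)) / S := by
            rw [hmean kk v i, hw1, mul_zero, zero_add, mul_one]
            exact scal2 _ _ _ _ _ hsne hSne hs2
    rw [Finset.sum_congr rfl (fun i _ => hinner i)]
    rw [← Finset.sum_div, Finset.sum_neg_distrib, neg_div]
  set M : Matrix (Fin n) (Fin n) ℝ := 1 - S⁻¹ • (Matrix.transpose A * A) with hMdef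
  have hB : ∀ z : Fin n → ℝ, (Matrix.transpose A * A).mulVec z
      = fun j => ∑ i, A i j * ∑ l, A i l * z l := by
    intro z
    funext j
    rw [← Matrix.mulVec_mulVec]
    simp [Matrix.mulVec, dotProduct, Matrix.transpose_apply]
  have hMmul : ∀ z : Fin n → ℝ, Matrix.mulVec M z
      = fun j => z j - (∑ i, A i j * ∑ l, A i l * z l) / S := by
    intro z
    funext j
    rw [hMdef, Matrix.sub_mulVec]
    simp only [Pi.sub_apply]
    rw [Matrix.one_mulVec]
    congr 1
    rw [Matrix.smul_mulVec, hB]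
    simp only [Pi.smul_apply, smul_eq_mul]
    rw [div_eq_inv_mul]
  have hCS : ∀ z : Fin n → ℝ, ∑ i, (∑ l, A i l * z l) ^ 2 ≤ S * ∑ j, z j ^ 2 := by
    intro z
    rw [hSdef, Finset.sum_mul]
    apply Finset.sum_le_sum
    intro i _
    exact Finset.sum_mul_sq_le_sq_mul_sq Finset.univ (fun l => A i l) z
  have hMps : M.PosSemidef := by
    rw [Matrix.posSemidef_iff_dotProduct_mulVec]
    constructor
    · show Matrix.conjTranspose M = M
      rw [hMdef]
      ext i j
      simp only [Matrix.conjTranspose_apply, Matrix.sub_apply, Matrix.smul_apply,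
        Matrix.one_apply, Matrix.mul_apply, Matrix.transpose_apply, smul_eq_mul,
        star_sub, star_mul', star_sum, star_trivial]
      congr 1
      · by_cases hij : i = j <;> simp [hij, eq_comm]
      · congr 1
        exact Finset.sum_congr rfl (fun l _ => by ring)
    · intro z
      have hz : dotProduct (star z) (M.mulVec z)
          = (∑ j, z j ^ 2) - (∑ i, (∑ l, A i l * z l) ^ 2) / S := by
        rw [hMmul]
        unfold dotProduct
        calc ∑ j, star z j * (z j - (∑ i, A i j * ∑ l, A i l * z l) / S)
            = ∑ j, (z j ^ 2 - (z j * ∑ i, A i j * ∑ l, A i l * z l) / S) := by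
              apply Finset.sum_congr rfl
              intro j _
              have : star z j = z j := rfl
              rw [this]
              ring
          _ = (∑ j, z j ^ 2) - (∑ j, z j * ∑ i, A i j * ∑ l, A i l * z l) / S := by
              rw [Finset.sum_sub_distrib, Finset.sum_div]
          _ = (∑ j, z j ^ 2) - (∑ i, (∑ l, A i l * z l) ^ 2) / S := by
              congr 2
              calc ∑ j, z j * ∑ i, A i j * ∑ l, A i l * z l
                  = ∑ j, ∑ i, (A i j * z j) * (∑ l, A i l * z l) := by
                    apply Finset.sum_congr rfl
                    intro j _
                    rw [Finset.mul_sum]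
                    exact Finset.sum_congr rfl (fun i _ => by ring)
                _ = ∑ i, ∑ j, (A i j * z j) * (∑ l, A i l * z l) := Finset.sum_comm
                _ = ∑ i, (∑ l, A i l * z l) ^ 2 := by
                    apply Finset.sum_congr rfl
                    intro i _
                    rw [← Finset.sum_mul]
                    rw [sq]
      rw [hz]
      have h1 := hCS z
      have h2 : (∑ i, (∑ l, A i l * z l) ^ 2) / S ≤ ∑ j, z j ^ 2 := by
        rw [div_le_iff₀ hSpos]
        exact h1.trans_eq (mul_comm _ _)
      linarith
  have hpowpos : ∀ k : ℕ, 0 ≤ dotProduct xstar ((M ^ k).mulVec xstar) := by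
    intro k
    have h := (hMps.pow k).dotProduct_mulVec_nonneg xstar
    have hsz : star xstar = xstar := by
      funext j
      rfl
    rwa [hsz] at h
  have hswapn : ∀ (φ : Fin n → ℝ) (y : (Fin T → Fin m × Ξ) → Fin n → ℝ),
      ∑ ω, P ω * ∑ j, φ j * y ω j = ∑ j, φ j * ∑ ω, P ω * y ω j := by
    intro φ y
    calc ∑ ω, P ω * ∑ j, φ j * y ω j
        = ∑ ω, ∑ j, φ j * (P ω * y ω j) := by
          apply Finset.sum_congr rfl
          intro ω _
          rw [Finset.mul_sum]
          exact Finset.sum_congr rfl (fun j _ => by ring)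
      _ = ∑ j, ∑ ω, φ j * (P ω * y ω j) := Finset.sum_comm
      _ = ∑ j, φ j * ∑ ω, P ω * y ω j := by
          apply Finset.sum_congr rfl
          intro j _
          exact (Finset.mul_sum _ _ _).symm
  have hswapm : ∀ (φ : Fin m → ℝ) (y : (Fin T → Fin m × Ξ) → Fin m → ℝ),
      ∑ ω, P ω * ∑ i, φ i * y ω i = ∑ i, φ i * ∑ ω, P ω * y ω i := by
    intro φ y
    calc ∑ ω, P ω * ∑ i, φ i * y ω i
        = ∑ ω, ∑ i, φ i * (P ω * y ω i) := by
          apply Finset.sum_congr rfl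
          intro ω _
          rw [Finset.mul_sum]
          exact Finset.sum_congr rfl (fun i _ => by ring)
      _ = ∑ i, ∑ ω, φ i * (P ω * y ω i) := Finset.sum_comm
      _ = ∑ i, φ i * ∑ ω, P ω * y ω i := by
          apply Finset.sum_congr rfl
          intro i _
          exact (Finset.mul_sum _ _ _).symm
  have hwv0 : (fun j => ∑ ω, P ω * (x ω 0 j - xstar j)) = fun j => -xstar j := by
    funext j
    calc ∑ ω, P ω * (x ω 0 j - xstar j) = ∑ ω, P ω * (0 - xstar j) := by
          apply Finset.sum_congr rfl
          intro ω _
          rw [hinit ω, Pi.zero_apply]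
      _ = -xstar j := by
          rw [← Finset.sum_mul, hPsum, one_mul, zero_sub]
  have hwvrec : ∀ k : ℕ, k < T →
      (fun j => ∑ ω, P ω * (x ω (k+1) j - xstar j))
      = M.mulVec (fun j => ∑ ω, P ω * (x ω k j - xstar j)) := by
    intro k hk
    funext j
    have hL' : ∑ ω, P ω * ((x ω k j + ((b ((ω ⟨k, hk⟩).1) / Real.sqrt (∑ l, A ((ω ⟨k, hk⟩).1) l ^ 2)
            - ∑ l, A ((ω ⟨k, hk⟩).1) l / Real.sqrt (∑ l', A ((ω ⟨k, hk⟩).1) l' ^ 2) * x ω k l)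
          + g k (x ω k) ((ω ⟨k, hk⟩).1) ((ω ⟨k, hk⟩).2))
          * (A ((ω ⟨k, hk⟩).1) j / Real.sqrt (∑ l, A ((ω ⟨k, hk⟩).1) l ^ 2))) - xstar j)
        = ∑ ω, P ω * ∑ c : Fin m × Ξ, q c * ((x ω k j + ((b c.1 / Real.sqrt (∑ l, A c.1 l ^ 2)
            - ∑ l, A c.1 l / Real.sqrt (∑ l', A c.1 l' ^ 2) * x ω k l)
          + g k (x ω k) c.1 c.2)
          * (A c.1 j / Real.sqrt (∑ l, A c.1 l ^ 2))) - xstar j) :=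
      L1 ⟨k, hk⟩ (fun c v => (v j + ((b c.1 / Real.sqrt (∑ l, A c.1 l ^ 2)
            - ∑ l, A c.1 l / Real.sqrt (∑ l', A c.1 l' ^ 2) * v l)
          + g k v c.1 c.2)
          * (A c.1 j / Real.sqrt (∑ l, A c.1 l ^ 2))) - xstar j)
    calc ∑ ω, P ω * (x ω (k+1) j - xstar j)
        = ∑ ω, P ω * ((x ω k j + ((b ((ω ⟨k, hk⟩).1) / Real.sqrt (∑ l, A ((ω ⟨k, hk⟩).1) l ^ 2)
            - ∑ l, A ((ω ⟨k, hk⟩).1) l / Real.sqrt (∑ l', A ((ω ⟨k, hk⟩).1) l' ^ 2) * x ω k l)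
          + g k (x ω k) ((ω ⟨k, hk⟩).1) ((ω ⟨k, hk⟩).2))
          * (A ((ω ⟨k, hk⟩).1) j / Real.sqrt (∑ l, A ((ω ⟨k, hk⟩).1) l ^ 2))) - xstar j) := by
          apply Finset.sum_congr rfl
          intro ω _
          rw [hstep' ω k hk]
      _ = ∑ ω, P ω * ∑ c : Fin m × Ξ, q c * ((x ω k j + ((b c.1 / Real.sqrt (∑ l, A c.1 l ^ 2)
            - ∑ l, A c.1 l / Real.sqrt (∑ l', A c.1 l' ^ 2) * x ω k l)
          + g k (x ω k) c.1 c.2)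
          * (A c.1 j / Real.sqrt (∑ l, A c.1 l ^ 2))) - xstar j) := hL'
      _ = ∑ ω, P ω * ((x ω k j - xstar j)
            - (∑ i, A i j * ∑ l, A i l * (x ω k l - xstar l)) / S) := by
          apply Finset.sum_congr rfl
          intro ω _
          rw [key3 k (x ω k) j]
      _ = (∑ ω, P ω * (x ω k j - xstar j))
            - (∑ i, A i j * ∑ l, A i l * (∑ ω, P ω * (x ω k l - xstar l))) / S := by
          have e1 : ∀ ω : Fin T → Fin m × Ξ,
              P ω * ((x ω k j - xstar j) - (∑ i, A i j * ∑ l, A i l * (x ω k l - xstar l)) / S)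
              = P ω * (x ω k j - xstar j)
                - (P ω * ∑ i, A i j * (∑ l, A i l * (x ω k l - xstar l))) / S := by
            intro ω
            ring
          rw [Finset.sum_congr rfl (fun ω _ => e1 ω), Finset.sum_sub_distrib, ← Finset.sum_div]
          congr 1
          congr 1
          rw [hswapm (fun i => A i j) (fun ω i => ∑ l, A i l * (x ω k l - xstar l))]
          apply Finset.sum_congr rfl
          intro i _
          congr 1
          rw [hswapn (fun l => A i l) (fun ω l => (x ω k l - xstar l))]
      _ = M.mulVec (fun l => ∑ ω, P ω * (x ω k l - xstar l)) j := by
          rw [hMmul]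
  have hwvpow : ∀ k : ℕ, k ≤ T →
      (fun j => ∑ ω, P ω * (x ω k j - xstar j)) = (M ^ k).mulVec (fun j => -xstar j) := by
    intro k
    induction k with
    | zero =>
      intro _
      rw [hwv0, pow_zero, Matrix.one_mulVec]
    | succ k ih =>
      intro hk
      have hkT : k < T := Nat.lt_of_lt_of_le (Nat.lt_succ_self k) hk
      rw [hwvrec k hkT, ih (le_of_lt hkT), Matrix.mulVec_mulVec, ← pow_succ']
  have hcneg : ∀ k : ℕ, k ≤ T →
      ∑ j, xstar j * (∑ ω, P ω * (x ω k j - xstar j)) ≤ 0 := by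
    intro k hk
    have h1 : ∀ j, (∑ ω, P ω * (x ω k j - xstar j)) = (M ^ k).mulVec (fun j => -xstar j) j :=
      fun j => congrFun (hwvpow k hk) j
    have h2 : (M ^ k).mulVec (fun j => -xstar j) = fun j => -((M ^ k).mulVec xstar j) := by
      have hneg : (fun j => -xstar j) = -xstar := rfl
      rw [hneg, Matrix.mulVec_neg]
      rfl
    have h3 : ∑ j, xstar j * (∑ ω, P ω * (x ω k j - xstar j))
        = -(dotProduct xstar ((M ^ k).mulVec xstar)) := by
      unfold dotProduct
      rw [← Finset.sum_neg_distrib]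
      apply Finset.sum_congr rfl
      intro j _
      rw [h1 j, h2]
      dsimp only
      ring
    rw [h3]
    linarith [hpowpos k]
  have hu2 : ∀ k : ℕ, k ≤ T →
      ∑ ω, P ω * ∑ j, (x ω k j) ^ 2
        ≤ (∑ ω, P ω * ∑ j, (x ω k j - xstar j) ^ 2) + ∑ j, xstar j ^ 2 := by
    intro k hk
    have e1 : ∀ ω : Fin T → Fin m × Ξ, P ω * ∑ j, (x ω k j) ^ 2
        = P ω * ∑ j, (x ω k j - xstar j) ^ 2
          + 2 * (P ω * ∑ j, xstar j * (x ω k j - xstar j))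
          + P ω * ∑ j, xstar j ^ 2 := by
      intro ω
      have e2 : ∑ j, (x ω k j) ^ 2
          = (∑ j, (x ω k j - xstar j) ^ 2) + (∑ j, 2 * (xstar j * (x ω k j - xstar j)))
            + ∑ j, xstar j ^ 2 := by
        rw [← Finset.sum_add_distrib, ← Finset.sum_add_distrib]
        exact Finset.sum_congr rfl (fun j _ => by ring)
      rw [e2, ← Finset.mul_sum]
      ring
    rw [Finset.sum_congr rfl (fun ω _ => e1 ω)]
    rw [Finset.sum_add_distrib, Finset.sum_add_distrib]
    have e3 : ∑ ω, 2 * (P ω * ∑ j, xstar j * (x ω k j - xstar j))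
        = 2 * ∑ j, xstar j * ∑ ω, P ω * (x ω k j - xstar j) := by
      rw [← Finset.mul_sum, hswapn xstar (fun ω j => x ω k j - xstar j)]
    have e4 : ∑ ω, P ω * ∑ j, xstar j ^ 2 = ∑ j, xstar j ^ 2 := by
      rw [← Finset.sum_mul, hPsum, one_mul]
    rw [e3, e4]
    have h5 := hcneg k hk
    linarith
  have hX20 : 0 ≤ ∑ j, xstar j ^ 2 := Finset.sum_nonneg fun j _ => sq_nonneg _
  have hrrec : ∀ k : ℕ, k < T →
      (∑ ω, P ω * ∑ j, (x ω (k+1) j - xstar j) ^ 2)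
        ≤ (1 - a + dlt) * (∑ ω, P ω * ∑ j, (x ω k j - xstar j) ^ 2)
          + dlt * ∑ j, xstar j ^ 2 := by
    intro k hk
    have hL' : ∑ ω, P ω * ∑ j, ((x ω k j + ((b ((ω ⟨k, hk⟩).1) / Real.sqrt (∑ l, A ((ω ⟨k, hk⟩).1) l ^ 2)
            - ∑ l, A ((ω ⟨k, hk⟩).1) l / Real.sqrt (∑ l', A ((ω ⟨k, hk⟩).1) l' ^ 2) * x ω k l)
          + g k (x ω k) ((ω ⟨k, hk⟩).1) ((ω ⟨k, hk⟩).2))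
          * (A ((ω ⟨k, hk⟩).1) j / Real.sqrt (∑ l, A ((ω ⟨k, hk⟩).1) l ^ 2))) - xstar j) ^ 2
        = ∑ ω, P ω * ∑ c : Fin m × Ξ, q c * ∑ j, ((x ω k j + ((b c.1 / Real.sqrt (∑ l, A c.1 l ^ 2)
            - ∑ l, A c.1 l / Real.sqrt (∑ l', A c.1 l' ^ 2) * x ω k l)
          + g k (x ω k) c.1 c.2)
          * (A c.1 j / Real.sqrt (∑ l, A c.1 l ^ 2))) - xstar j) ^ 2 :=
      L1 ⟨k, hk⟩ (fun c v => ∑ j, ((v j + ((b c.1 / Real.sqrt (∑ l, A c.1 l ^ 2)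
            - ∑ l, A c.1 l / Real.sqrt (∑ l', A c.1 l' ^ 2) * v l)
          + g k v c.1 c.2)
          * (A c.1 j / Real.sqrt (∑ l, A c.1 l ^ 2))) - xstar j) ^ 2)
    calc ∑ ω, P ω * ∑ j, (x ω (k+1) j - xstar j) ^ 2
        = ∑ ω, P ω * ∑ j, ((x ω k j + ((b ((ω ⟨k, hk⟩).1) / Real.sqrt (∑ l, A ((ω ⟨k, hk⟩).1) l ^ 2)
            - ∑ l, A ((ω ⟨k, hk⟩).1) l / Real.sqrt (∑ l', A ((ω ⟨k, hk⟩).1) l' ^ 2) * x ω k l)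
          + g k (x ω k) ((ω ⟨k, hk⟩).1) ((ω ⟨k, hk⟩).2))
          * (A ((ω ⟨k, hk⟩).1) j / Real.sqrt (∑ l, A ((ω ⟨k, hk⟩).1) l ^ 2))) - xstar j) ^ 2 := by
          apply Finset.sum_congr rfl
          intro ω _
          rw [hstep' ω k hk]
      _ = ∑ ω, P ω * ∑ c : Fin m × Ξ, q c * ∑ j, ((x ω k j + ((b c.1 / Real.sqrt (∑ l, A c.1 l ^ 2)
            - ∑ l, A c.1 l / Real.sqrt (∑ l', A c.1 l' ^ 2) * x ω k l)
          + g k (x ω k) c.1 c.2)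
          * (A c.1 j / Real.sqrt (∑ l, A c.1 l ^ 2))) - xstar j) ^ 2 := hL'
      _ ≤ ∑ ω, P ω * ((1 - a) * (∑ j, (x ω k j - xstar j) ^ 2) + dlt * ∑ j, (x ω k j) ^ 2) := by
          apply Finset.sum_le_sum
          intro ω _
          apply mul_le_mul_of_nonneg_left _ (hP0 ω)
          apply key2 k (x ω k)
          obtain ⟨y, hy⟩ := xrow ω k (le_of_lt hk)
          obtain ⟨ys, hys⟩ := hxstar
          have hrowu : (fun l => x ω k l - xstar l) = Matrix.vecMul (y - ys) A := by
            funext l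
            rw [Matrix.sub_vecMul]
            simp only [Pi.sub_apply]
            rw [← congrFun hy l, ← congrFun hys l]
          exact hcinv (fun l => x ω k l - xstar l) ⟨y - ys, hrowu⟩
      _ ≤ (1 - a + dlt) * (∑ ω, P ω * ∑ j, (x ω k j - xstar j) ^ 2)
          + dlt * ∑ j, xstar j ^ 2 := by
          have e1 : ∑ ω, P ω * ((1 - a) * (∑ j, (x ω k j - xstar j) ^ 2) + dlt * ∑ j, (x ω k j) ^ 2)
              = (1 - a) * (∑ ω, P ω * ∑ j, (x ω k j - xstar j) ^ 2)
                + dlt * (∑ ω, P ω * ∑ j, (x ω k j) ^ 2) := by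
            rw [Finset.mul_sum, Finset.mul_sum, ← Finset.sum_add_distrib]
            exact Finset.sum_congr rfl (fun ω _ => by ring)
          rw [e1]
          have h2 := hu2 k (le_of_lt hk)
          have h3 := mul_le_mul_of_nonneg_left h2 hd0
          nlinarith [h3]
  have hmain : ∀ k : ℕ, k ≤ T →
      (∑ ω, P ω * ∑ j, (x ω k j - xstar j) ^ 2)
        ≤ (1 - a + dlt) ^ k * (∑ j, xstar j ^ 2) + k * (dlt * ∑ j, xstar j ^ 2) := by
    intro k
    induction k with
    | zero =>
      intro _
      have e0 : ∑ ω, P ω * ∑ j, (x ω 0 j - xstar j) ^ 2 = ∑ j, xstar j ^ 2 := by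
        have e1 : ∀ ω : Fin T → Fin m × Ξ, P ω * ∑ j, (x ω 0 j - xstar j) ^ 2
            = P ω * ∑ j, xstar j ^ 2 := by
          intro ω
          congr 1
          apply Finset.sum_congr rfl
          intro j _
          rw [hinit ω, Pi.zero_apply]
          ring
        rw [Finset.sum_congr rfl (fun ω _ => e1 ω), ← Finset.sum_mul, hPsum, one_mul]
      rw [e0, pow_zero]
      push_cast
      linarith
    | succ k ih =>
      intro hk
      have hkT : k < T := Nat.lt_of_lt_of_le (Nat.lt_succ_self k) hk
      have h1 := hrrec k hkT
      have h2 := ih (le_of_lt hkT)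
      have hα0 : (0:ℝ) ≤ 1 - a + dlt := by linarith
      have hα1 : 1 - a + dlt ≤ 1 := by linarith
      have hmul' : (1 - a + dlt) * (∑ ω, P ω * ∑ j, (x ω k j - xstar j) ^ 2)
          ≤ (1 - a + dlt) ^ (k+1) * (∑ j, xstar j ^ 2)
            + (1 - a + dlt) * (k * (dlt * ∑ j, xstar j ^ 2)) := by
        calc (1 - a + dlt) * (∑ ω, P ω * ∑ j, (x ω k j - xstar j) ^ 2)
            ≤ (1 - a + dlt) * ((1 - a + dlt) ^ k * (∑ j, xstar j ^ 2)
                + k * (dlt * ∑ j, xstar j ^ 2)) := mul_le_mul_of_nonneg_left h2 hα0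
          _ = (1 - a + dlt) ^ (k+1) * (∑ j, xstar j ^ 2)
              + (1 - a + dlt) * (k * (dlt * ∑ j, xstar j ^ 2)) := by
              rw [pow_succ]
              ring
      have hklα : (1 - a + dlt) * ((k:ℝ) * (dlt * ∑ j, xstar j ^ 2))
          ≤ (k:ℝ) * (dlt * ∑ j, xstar j ^ 2) := by
        have hnn : (0:ℝ) ≤ (k:ℝ) * (dlt * ∑ j, xstar j ^ 2) :=
          mul_nonneg (Nat.cast_nonneg k) (mul_nonneg hd0 hX20)
        nlinarith
      push_cast
      linarith
  -- final numeric bound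
  have hαexp : 1 - a + dlt ≤ Real.exp (dlt - a) := by
    have := Real.add_one_le_exp (dlt - a)
    linarith
  have hα0 : (0:ℝ) ≤ 1 - a + dlt := by linarith
  have hTda : (T:ℝ) * (dlt - a) = ε ^ 2 / 4 - L := by
    have h1 := hdT
    have h2 := haT
    ring_nf
    ring_nf at h1 h2
    linarith
  have hαT : (1 - a + dlt) ^ T ≤ 3 / 4 * ε ^ 2 := by
    calc (1 - a + dlt) ^ T ≤ (Real.exp (dlt - a)) ^ T := pow_le_pow_left₀ hα0 hαexp T
      _ = Real.exp ((T:ℝ) * (dlt - a)) := by rw [← Real.exp_nat_mul]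
      _ = Real.exp (ε ^ 2 / 4 - L) := by rw [hTda]
      _ = Real.exp (ε ^ 2 / 4) * Real.exp (-L) := by
          rw [← Real.exp_add, sub_eq_add_neg]
      _ = Real.exp (ε ^ 2 / 4) * (ε ^ 2 / 2) := by
          rw [hLdef, Real.exp_neg, Real.exp_log (by positivity), inv_div]
      _ ≤ 3 / 2 * (ε ^ 2 / 2) := by
          apply mul_le_mul_of_nonneg_right _ (by positivity)
          calc Real.exp (ε ^ 2 / 4) ≤ Real.exp (1 / 4) := Real.exp_le_exp.mpr (by linarith)
            _ ≤ 3 / 2 := hexp14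
      _ = 3 / 4 * ε ^ 2 := by ring
  have hfin := hmain T (le_refl T)
  have hTd2 : (T:ℝ) * (dlt * ∑ j, xstar j ^ 2) = ε ^ 2 / 4 * ∑ j, xstar j ^ 2 := by
    rw [← mul_assoc, mul_comm (T:ℝ) dlt, hdT]
  have hfinal : (∑ ω, P ω * ∑ j, (x ω T j - xstar j) ^ 2) ≤ ε ^ 2 * ∑ j, xstar j ^ 2 := by
    rw [hTd2] at hfin
    have h1 := mul_le_mul_of_nonneg_right hαT hX20
    calc (∑ ω, P ω * ∑ j, (x ω T j - xstar j) ^ 2)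
        ≤ (1 - a + dlt) ^ T * (∑ j, xstar j ^ 2) + ε ^ 2 / 4 * ∑ j, xstar j ^ 2 := hfin
      _ ≤ 3 / 4 * ε ^ 2 * (∑ j, xstar j ^ 2) + ε ^ 2 / 4 * ∑ j, xstar j ^ 2 := by linarith
      _ = ε ^ 2 * ∑ j, xstar j ^ 2 := by ring
  exact hfinal
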